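/- Let μ be a probability measure on the unit circle S¹ with arclength distance d, and let p* ∈ S¹ be a critical point of the Fréchet functional F_μ (i.e. m(μ_{p*}) = 0, where μ_{p*} is the image of μ in the normal chart centered at p*). Then the following are equivalent: (1) p* is the unique global minimizer of F_μ on S¹ (the well-defined Fréchet mean of μ); (2) for all 0 < θ < π, ∫₀^θ (λ([−π,−π+t)) − μ_{p*}([−π,−π+t))) dt > 0, and for all −π ≤ θ < 0, ∫_θ^0 (λ((π+t,π)) − μ_{p*}((π+t,π))) dt > 0, where λ is the uniform probability measure on [−π,π) (so λ([−π,−π+t)) = t/(2π)). -/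

import Mathlib

open MeasureTheory Real Set Filter

noncomputable section

/-- The unit circle `S¹` in `ℝ² ≃ ℂ`. -/
abbrev S1 := {x : ℂ // ‖x‖ = 1}

/-- The arclength distance on `S¹`. -/
def dS1 (x p : S1) : ℝ := 2 * Real.arcsin (‖(x : ℂ) - (p : ℂ)‖ / 2)

/-- The Fréchet functional of a measure `μ` on `S¹`. -/
def frechet (μ : Measure S1) (p : S1) : ℝ := (1/2) * ∫ x, (dS1 x p)^2 ∂μ

/-- The normal coordinate chart centered at `p`: `θ ↦ R_θ p`. -/
def chart (p : S1) (θ : ℝ) : S1 :=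
  ⟨Complex.exp (θ * Complex.I) * (p : ℂ), by
    rw [norm_mul, Complex.norm_exp_ofReal_mul_I, p.2, mul_one]⟩

/-- The inverse chart, with values in `[-π, π)`. -/
def invChart (p₀ : S1) (p : S1) : ℝ :=
  if Complex.arg ((p : ℂ) / (p₀ : ℂ)) = π then -π else Complex.arg ((p : ℂ) / (p₀ : ℂ))

/-- The image measure `μ_{p₀}` of `μ` in the normal chart centered at `p₀`. -/
def chartMeasure (μ : Measure S1) (p₀ : S1) : Measure ℝ := Measure.map (invChart p₀) μ

/-- `m(μ_{p₀})`, the Euclidean mean of the image measure in the chart centered at `p₀`. -/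
def mMean (μ : Measure S1) (p₀ : S1) : ℝ := ∫ t, t ∂(chartMeasure μ p₀)

/-- The antipodal point (cut locus) of `p`. -/
def antipode (p : S1) : S1 := ⟨-(p : ℂ), by rw [norm_neg]; exact p.2⟩

/-- The (left-continuous extension of the) derivative of `θ ↦ F_μ(e_{p₀}(θ))`. -/
def frechetExtDeriv (μ : Measure S1) (p₀ : S1) (θ : ℝ) : ℝ :=
  if 0 ≤ θ then θ - 2*π*(chartMeasure μ p₀ (Ico (-π) (-π+θ))).toReal - mMean μ p₀
  else θ + 2*π*(chartMeasure μ p₀ (Ico (π+θ) π)).toReal - mMean μ p₀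

def basePt : S1 := ⟨1, by norm_num⟩

/-- The (unnormalized) arclength measure on `S¹`, of total mass `2π`. -/
def arcMeasure : Measure S1 := Measure.map (chart basePt) (volume.restrict (Ico (-π) π))

/-- Property `P(p, α, φ)` for a density `f` on `S¹`. -/
def propP (f : S1 → ℝ) (p : S1) (α φ : ℝ) : Prop :=
  ∀ θ ∈ Ico (-π) π, φ ≤ |θ| → f (chart p θ) ≤ (1 - α)/(2*π)

-- basics
lemma S1.ne_zero (p : S1) : (p : ℂ) ≠ 0 := by
  intro h; have := p.2; rw [h] at this; simp at this

lemma chart_zero (p : S1) : chart p 0 = p := by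
  apply Subtype.ext; simp [chart]

lemma exp_invChart (p q : S1) :
    Complex.exp ((invChart p q : ℂ) * Complex.I) = (q : ℂ) / (p : ℂ) := by
  have habs : ‖(q : ℂ) / (p : ℂ)‖ = 1 := by
    rw [norm_div, q.2, p.2]; norm_num
  have h := Complex.norm_mul_exp_arg_mul_I ((q : ℂ) / (p : ℂ))
  rw [habs] at h; push_cast at h; rw [one_mul] at h
  unfold invChart
  split_ifs with hπ
  · rw [hπ] at h
    push_cast
    rw [neg_mul, Complex.exp_neg, ← h, Complex.exp_pi_mul_I]
    norm_num
  · exact h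

lemma chart_invChart (p q : S1) : chart p (invChart p q) = q := by
  apply Subtype.ext
  show Complex.exp ((invChart p q : ℂ) * Complex.I) * (p : ℂ) = (q : ℂ)
  rw [exp_invChart, div_mul_cancel₀ _ (S1.ne_zero p)]

lemma invChart_mem (p q : S1) : invChart p q ∈ Ico (-π) π := by
  unfold invChart
  split_ifs with hπ
  · exact ⟨le_rfl, by linarith [Real.pi_pos]⟩
  · exact ⟨(Complex.neg_pi_lt_arg _).le, lt_of_le_of_ne (Complex.arg_le_pi _) hπ⟩

lemma arg_exp_real (θ : ℝ) (h1 : -π < θ) (h2 : θ ≤ π) :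
    Complex.arg (Complex.exp ((θ:ℂ) * Complex.I)) = θ := by
  rw [Complex.exp_mul_I]
  exact_mod_cast Complex.arg_cos_add_sin_mul_I ⟨h1, h2⟩

lemma invChart_chart (p : S1) {θ : ℝ} (hθ : θ ∈ Ico (-π) π) :
    invChart p (chart p θ) = θ := by
  have hdiv : ((chart p θ : S1) : ℂ) / (p : ℂ) = Complex.exp ((θ:ℂ) * Complex.I) := by
    show Complex.exp ((θ:ℂ) * Complex.I) * (p : ℂ) / (p : ℂ) = _
    rw [mul_div_assoc, div_self (S1.ne_zero p), mul_one]
  unfold invChart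
  rw [hdiv]
  rcases eq_or_lt_of_le hθ.1 with h | h
  · subst h
    have : Complex.exp ((-π:ℝ) * Complex.I) = Complex.exp ((π:ℝ) * Complex.I) := by
      push_cast
      rw [neg_mul, Complex.exp_neg, Complex.exp_pi_mul_I]; norm_num
    rw [this, arg_exp_real π (by linarith [Real.pi_pos]) le_rfl]
    simp
  · rw [arg_exp_real θ h hθ.2.le]
    simp [ne_of_lt hθ.2]

lemma invChart_self (p : S1) : invChart p p = 0 := by
  have := invChart_chart p (θ := 0) ⟨by linarith [Real.pi_pos], Real.pi_pos⟩
  rwa [chart_zero] at this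

lemma exp_arg_div (p q : S1) :
    Complex.exp ((Complex.arg ((q : ℂ) / (p : ℂ)) : ℂ) * Complex.I) = (q : ℂ) / (p : ℂ) := by
  have habs : ‖(q : ℂ) / (p : ℂ)‖ = 1 := by
    rw [norm_div, q.2, p.2]; norm_num
  have h := Complex.norm_mul_exp_arg_mul_I ((q : ℂ) / (p : ℂ))
  rw [habs] at h; push_cast at h; rwa [one_mul] at h

lemma norm_exp_sub_one (φ : ℝ) : ‖Complex.exp ((φ:ℂ) * Complex.I) - 1‖ = 2 * |Real.sin (φ/2)| := by
  have h : ‖Complex.exp ((φ:ℂ) * Complex.I) - 1‖^2 = (2 * |Real.sin (φ/2)|)^2 := by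
    rw [Complex.sq_norm, Complex.normSq_apply]
    rw [Complex.exp_mul_I]
    rw [← Complex.ofReal_cos, ← Complex.ofReal_sin]
    simp only [Complex.add_re, Complex.add_im, Complex.sub_re, Complex.sub_im,
      Complex.mul_re, Complex.mul_im, Complex.I_re, Complex.I_im, Complex.one_re, Complex.one_im,
      Complex.ofReal_re, Complex.ofReal_im]
    have hc : Real.cos φ = 1 - 2 * Real.sin (φ/2)^2 := by
      have h1 := Real.cos_two_mul (φ/2)
      rw [(by ring : 2 * (φ/2) = φ)] at h1
      have h2 : Real.sin (φ/2)^2 + Real.cos (φ/2)^2 = 1 := Real.sin_sq_add_cos_sq _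
      nlinarith
    nlinarith [Real.sin_sq_add_cos_sq φ, sq_abs (Real.sin (φ/2))]
  have h1 : (0:ℝ) ≤ ‖Complex.exp ((φ:ℂ) * Complex.I) - 1‖ := norm_nonneg _
  have h2 : (0:ℝ) ≤ 2 * |Real.sin (φ/2)| := by positivity
  nlinarith

lemma dS1_eq_arg (x p : S1) : dS1 x p = |Complex.arg ((x : ℂ) / (p : ℂ))| := by
  unfold dS1
  set φ := Complex.arg ((x : ℂ) / (p : ℂ)) with hφ
  have hmem : φ ∈ Ioc (-π) π := ⟨Complex.neg_pi_lt_arg _, Complex.arg_le_pi _⟩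
  have hx : ‖(x : ℂ) - (p : ℂ)‖ = 2 * |Real.sin (φ/2)| := by
    have : (x : ℂ) - (p : ℂ) = (Complex.exp ((φ:ℂ) * Complex.I) - 1) * (p : ℂ) := by
      rw [sub_mul, one_mul, exp_arg_div, div_mul_cancel₀ _ (S1.ne_zero p)]
    rw [this, norm_mul, p.2, mul_one, norm_exp_sub_one]
  rw [hx]
  have habs : |Real.sin (φ/2)| = Real.sin (|φ|/2) := by
    rcases le_or_gt 0 φ with h | h
    · rw [abs_of_nonneg h, abs_of_nonneg]
      exact Real.sin_nonneg_of_nonneg_of_le_pi (by linarith) (by linarith [hmem.2])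
    · rw [abs_of_neg h, abs_of_nonpos (Real.sin_nonpos_of_nonpos_of_neg_pi_le (by linarith) (by linarith [hmem.1])), ← Real.sin_neg, neg_div]
  rw [(by ring : 2 * |Real.sin (φ/2)| / 2 = |Real.sin (φ/2)|), habs,
    Real.arcsin_sin (by linarith [abs_nonneg φ, Real.pi_pos]) (by
      have := abs_le.mpr ⟨hmem.1.le, hmem.2⟩; linarith)]
  ring
/-- auxiliary: squared angular distance in the chart -/
def Afun (u : ℝ) : ℝ := |Complex.arg (Complex.exp ((u:ℂ) * Complex.I))|

lemma dS1_chart_chart (p : S1) (s θ : ℝ) :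
    dS1 (chart p s) (chart p θ) = Afun (s - θ) := by
  rw [dS1_eq_arg]
  unfold Afun
  congr 2
  show Complex.exp ((s:ℂ) * Complex.I) * (p:ℂ) / (Complex.exp ((θ:ℂ) * Complex.I) * (p:ℂ)) = _
  rw [mul_div_mul_right _ _ (S1.ne_zero p), ← Complex.exp_sub]
  push_cast; ring_nf

lemma Afun_eq_abs {u : ℝ} (hu : u ∈ Icc (-π) π) : Afun u = |u| := by
  unfold Afun
  rcases eq_or_lt_of_le hu.1 with h | h
  · subst h
    have : Complex.exp (((-π:ℝ):ℂ) * Complex.I) = -1 := by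
      push_cast
      rw [neg_mul, Complex.exp_neg, Complex.exp_pi_mul_I]; norm_num
    rw [this]
    simp [Complex.arg_neg_one, abs_of_nonneg Real.pi_pos.le, abs_of_nonpos (by linarith [Real.pi_pos] : -π ≤ 0)]
  · rw [arg_exp_real u h hu.2]

lemma Afun_add_two_pi (u : ℝ) : Afun (u + 2*π) = Afun u := by
  unfold Afun
  congr 2
  push_cast
  rw [add_mul, Complex.exp_add]
  have : Complex.exp (2 * (π:ℂ) * Complex.I) = 1 := Complex.exp_two_pi_mul_I
  rw [this, mul_one]

lemma Afun_sub_two_pi (u : ℝ) : Afun (u - 2*π) = Afun u := by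
  rw [← Afun_add_two_pi (u - 2*π)]; ring_nf

/-- Pointwise identity, positive side -/
lemma pointwise_pos {θ s : ℝ} (hθ : θ ∈ Ioo 0 π) (hs : s ∈ Ico (-π) π) :
    (Afun (s - θ))^2 = s^2 + (θ^2 - 2*θ*s)
      + (Iio (θ - π)).indicator (fun s => 4*π*(π - θ + s)) s := by
  have hπ := Real.pi_pos
  rcases lt_or_ge s (θ - π) with h | h
  · rw [Set.indicator_of_mem (show s ∈ Iio (θ - π) from h)]
    rw [← Afun_add_two_pi, Afun_eq_abs ⟨by linarith [hs.1, hθ.2], by linarith⟩, sq_abs]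
    ring
  · rw [Set.indicator_of_notMem (show s ∉ Iio (θ - π) by simpa using h)]
    rw [Afun_eq_abs ⟨by linarith, by linarith [hs.2, hθ.1]⟩, sq_abs]
    ring

/-- Pointwise identity, negative side -/
lemma pointwise_neg {θ s : ℝ} (hθ : θ ∈ Ico (-π) 0) (hs : s ∈ Ico (-π) π) :
    (Afun (s - θ))^2 = s^2 + (θ^2 - 2*θ*s)
      - (Ioi (π + θ)).indicator (fun s => 4*π*(s - θ - π)) s := by
  have hπ := Real.pi_pos
  rcases lt_or_ge (π + θ) s with h | h
  · rw [Set.indicator_of_mem (show s ∈ Ioi (π + θ) from h)]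
    rw [← Afun_sub_two_pi, Afun_eq_abs ⟨by linarith, by linarith [hs.2, hθ.1]⟩, sq_abs]
    ring
  · rw [Set.indicator_of_notMem (show s ∉ Ioi (π + θ) by simpa using h)]
    rw [Afun_eq_abs ⟨by linarith [hs.1, hθ.2], by linarith⟩, sq_abs]
    ring
lemma measurable_invChart (p : S1) : Measurable (invChart p) := by
  have hg : Measurable fun q : S1 => Complex.arg ((q : ℂ) / (p : ℂ)) :=
    Complex.measurable_arg.comp (measurable_subtype_coe.div_const _)
  exact Measurable.ite (hg (measurableSet_singleton π)) measurable_const hg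

instance chartMeasure_prob (μ : Measure S1) [IsProbabilityMeasure μ] (p : S1) :
    IsProbabilityMeasure (chartMeasure μ p) :=
  Measure.isProbabilityMeasure_map (measurable_invChart p).aemeasurable

lemma chartMeasure_ae (μ : Measure S1) (p : S1) :
    ∀ᵐ s ∂(chartMeasure μ p), s ∈ Ico (-π) π := by
  unfold chartMeasure
  rw [MeasureTheory.ae_map_iff (measurable_invChart p).aemeasurable
    (show MeasurableSet {s : ℝ | s ∈ Ico (-π) π} from measurableSet_Ico)]
  filter_upwards with q using invChart_mem p q

lemma measurable_Afun : Measurable Afun := by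
  unfold Afun
  exact (Complex.measurable_arg.comp
    (Complex.continuous_exp.measurable.comp
      ((Complex.measurable_ofReal).mul_const _))).abs

lemma integral_chartMeasure (μ : Measure S1) [IsProbabilityMeasure μ] (p : S1)
    {f : ℝ → ℝ} (hf : Measurable f) :
    ∫ s, f s ∂(chartMeasure μ p) = ∫ x, f (invChart p x) ∂μ :=
  MeasureTheory.integral_map (measurable_invChart p).aemeasurable
    hf.aestronglyMeasurable

lemma frechet_chart (μ : Measure S1) [IsProbabilityMeasure μ] (p : S1) (θ : ℝ) :
    frechet μ (chart p θ) = (1/2) * ∫ s, (Afun (s - θ))^2 ∂(chartMeasure μ p) := by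
  unfold frechet
  congr 1
  rw [integral_chartMeasure μ p (by
    exact ((measurable_Afun.comp (measurable_id.sub_const θ)).pow_const 2))]
  apply integral_congr_ae
  filter_upwards with x
  rw [← dS1_chart_chart p (invChart p x) θ, chart_invChart]

lemma frechet_self (μ : Measure S1) [IsProbabilityMeasure μ] (p : S1) :
    frechet μ p = (1/2) * ∫ s, s^2 ∂(chartMeasure μ p) := by
  conv_lhs => rw [← chart_zero p, frechet_chart]
  congr 1
  apply integral_congr_ae
  filter_upwards [chartMeasure_ae μ p] with s hs
  rw [sub_zero, Afun_eq_abs ⟨hs.1, hs.2.le⟩, sq_abs]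

/-- integrability of bounded measurable functions wrt a probability measure -/
lemma integrable_of_bdd {ν : Measure ℝ} [IsProbabilityMeasure ν] {f : ℝ → ℝ} (C : ℝ)
    (hf : Measurable f) (hC : ∀ᵐ s ∂ν, |f s| ≤ C) : Integrable f ν :=
  (integrable_const C).mono' hf.aestronglyMeasurable (by simpa using hC)
lemma fubini_pos (μ : Measure S1) [IsProbabilityMeasure μ] (p : S1) {θ : ℝ}
    (hθ : θ ∈ Ioo 0 π) :
    ∫ t in (0:ℝ)..θ, (chartMeasure μ p (Ico (-π) (-π + t))).toReal
      = ∫ s, (Iio (θ - π)).indicator (fun s => θ - π - s) s ∂(chartMeasure μ p) := by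
  set ν := chartMeasure μ p with hν
  have hπ := Real.pi_pos
  set E : Set (ℝ × ℝ) := {q | -π ≤ q.2} ∩ {q | q.2 + π < q.1} with hE
  have hEm : MeasurableSet E :=
    (measurableSet_le measurable_const measurable_snd).inter
      (measurableSet_lt (measurable_snd.add_const π) measurable_fst)
  haveI : IsFiniteMeasure (volume.restrict (Ioc (0:ℝ) θ)) :=
    ⟨by rw [Measure.restrict_apply_univ]; exact measure_Ioc_lt_top⟩
  have step2 : ∀ t : ℝ, ∫ s, E.indicator (fun _ => (1:ℝ)) (t, s) ∂ν
      = (ν (Ico (-π) (-π + t))).toReal := by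
    intro t
    have hfun : (fun s => E.indicator (fun _ => (1:ℝ)) (t, s))
        = (Ico (-π) (-π + t)).indicator (fun _ => (1:ℝ)) := by
      funext s
      by_cases h : s ∈ Ico (-π) (-π + t)
      · have h2 : s < -π + t := h.2
        rw [Set.indicator_of_mem h, Set.indicator_of_mem]
        exact ⟨h.1, show s + π < t by linarith⟩
      · rw [Set.indicator_of_notMem h, Set.indicator_of_notMem]
        intro hmem
        simp only [hE, mem_inter_iff, mem_setOf_eq] at hmem
        exact h ⟨hmem.1, by linarith [hmem.2]⟩
    rw [hfun, MeasureTheory.integral_indicator_const (1:ℝ) measurableSet_Ico]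
    simp [Measure.real]
  rw [intervalIntegral.integral_of_le hθ.1.le]
  have hint : Integrable (Function.uncurry fun t s => E.indicator (fun _ => (1:ℝ)) (t, s))
      ((volume.restrict (Ioc (0:ℝ) θ)).prod ν) :=
    (integrable_const (1:ℝ)).indicator hEm
  calc ∫ t in Ioc (0:ℝ) θ, (ν (Ico (-π) (-π + t))).toReal
      = ∫ t in Ioc (0:ℝ) θ, ∫ s, E.indicator (fun _ => (1:ℝ)) (t, s) ∂ν :=
        integral_congr_ae (Filter.Eventually.of_forall fun t => (step2 t).symm)
    _ = ∫ s, (∫ t in Ioc (0:ℝ) θ, E.indicator (fun _ => (1:ℝ)) (t, s)) ∂ν :=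
        MeasureTheory.integral_integral_swap hint
    _ = ∫ s, (Iio (θ - π)).indicator (fun s => θ - π - s) s ∂ν := by
        apply integral_congr_ae
        filter_upwards [chartMeasure_ae μ p] with s hs
        have hfun : (fun t => E.indicator (fun _ => (1:ℝ)) (t, s))
            = (Ioi (s + π)).indicator (fun _ => (1:ℝ)) := by
          funext t
          by_cases h : s + π < t
          · rw [Set.indicator_of_mem (show (t,s) ∈ E from ⟨hs.1, h⟩),
              Set.indicator_of_mem (show t ∈ Ioi (s+π) from h)]
          · rw [Set.indicator_of_notMem (show (t,s) ∉ E from fun hm => h hm.2),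
              Set.indicator_of_notMem (show t ∉ Ioi (s+π) from h)]
        rw [hfun, MeasureTheory.integral_indicator measurableSet_Ioi, setIntegral_const, Measure.real,
          Measure.restrict_apply measurableSet_Ioi, inter_comm, Ioc_inter_Ioi,
          max_eq_right (by linarith [hs.1] : (0:ℝ) ≤ s + π),
          Real.volume_Ioc, ENNReal.toReal_ofReal', smul_eq_mul, mul_one]
        by_cases h : s ∈ Iio (θ - π)
        · rw [Set.indicator_of_mem h]
          rw [max_eq_left (by simp only [mem_Iio] at h; linarith)]
          ring
        · rw [Set.indicator_of_notMem h]
          rw [max_eq_right (by simp only [mem_Iio, not_lt] at h; linarith)]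

lemma fubini_neg (μ : Measure S1) [IsProbabilityMeasure μ] (p : S1) {θ : ℝ}
    (hθ : θ ∈ Ico (-π) 0) :
    ∫ t in θ..(0:ℝ), (chartMeasure μ p (Ioo (π + t) π)).toReal
      = ∫ s, (Ioi (π + θ)).indicator (fun s => s - π - θ) s ∂(chartMeasure μ p) := by
  set ν := chartMeasure μ p with hν
  have hπ := Real.pi_pos
  set E : Set (ℝ × ℝ) := {q | q.1 < q.2 - π} ∩ {q | q.2 < π} with hE
  have hEm : MeasurableSet E :=
    (measurableSet_lt measurable_fst (measurable_snd.sub_const π)).inter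
      (measurableSet_lt measurable_snd measurable_const)
  haveI : IsFiniteMeasure (volume.restrict (Ioc θ (0:ℝ))) :=
    ⟨by rw [Measure.restrict_apply_univ]; exact measure_Ioc_lt_top⟩
  have step2 : ∀ t : ℝ, ∫ s, E.indicator (fun _ => (1:ℝ)) (t, s) ∂ν
      = (ν (Ioo (π + t) π)).toReal := by
    intro t
    have hfun : (fun s => E.indicator (fun _ => (1:ℝ)) (t, s))
        = (Ioo (π + t) π).indicator (fun _ => (1:ℝ)) := by
      funext s
      by_cases h : s ∈ Ioo (π + t) π
      · rw [Set.indicator_of_mem h, Set.indicator_of_mem]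
        exact ⟨by simp only [mem_Ioo] at h; simp only [mem_setOf_eq]; linarith [h.1], h.2⟩
      · rw [Set.indicator_of_notMem h, Set.indicator_of_notMem]
        intro hmem
        simp only [hE, mem_inter_iff, mem_setOf_eq] at hmem
        exact h ⟨by linarith [hmem.1], hmem.2⟩
    rw [hfun, MeasureTheory.integral_indicator_const (1:ℝ) measurableSet_Ioo]
    simp [Measure.real]
  rw [intervalIntegral.integral_of_le hθ.2.le]
  have hint : Integrable (Function.uncurry fun t s => E.indicator (fun _ => (1:ℝ)) (t, s))
      ((volume.restrict (Ioc θ (0:ℝ))).prod ν) :=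
    (integrable_const (1:ℝ)).indicator hEm
  calc ∫ t in Ioc θ (0:ℝ), (ν (Ioo (π + t) π)).toReal
      = ∫ t in Ioc θ (0:ℝ), ∫ s, E.indicator (fun _ => (1:ℝ)) (t, s) ∂ν :=
        integral_congr_ae (Filter.Eventually.of_forall fun t => (step2 t).symm)
    _ = ∫ s, (∫ t in Ioc θ (0:ℝ), E.indicator (fun _ => (1:ℝ)) (t, s)) ∂ν :=
        MeasureTheory.integral_integral_swap hint
    _ = ∫ s, (Ioi (π + θ)).indicator (fun s => s - π - θ) s ∂ν := by
        apply integral_congr_ae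
        filter_upwards [chartMeasure_ae μ p] with s hs
        have hfun : (fun t => E.indicator (fun _ => (1:ℝ)) (t, s))
            = (Iio (s - π)).indicator (fun _ => (1:ℝ)) := by
          funext t
          by_cases h : t < s - π
          · rw [Set.indicator_of_mem (show (t,s) ∈ E from ⟨h, hs.2⟩),
              Set.indicator_of_mem (show t ∈ Iio (s-π) from h)]
          · rw [Set.indicator_of_notMem (show (t,s) ∉ E from fun hm => h hm.1),
              Set.indicator_of_notMem (show t ∉ Iio (s-π) from h)]
        have hinter : Ioc θ (0:ℝ) ∩ Iio (s - π) = Ioo θ (s - π) := by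
          ext t
          simp only [mem_inter_iff, mem_Ioc, mem_Ioo, mem_Iio]
          constructor
          · rintro ⟨⟨h1, _⟩, h2⟩; exact ⟨h1, h2⟩
          · rintro ⟨h1, h2⟩; exact ⟨⟨h1, by linarith [hs.2]⟩, h2⟩
        rw [hfun, MeasureTheory.integral_indicator measurableSet_Iio, setIntegral_const, Measure.real,
          Measure.restrict_apply measurableSet_Iio, inter_comm, hinter,
          Real.volume_Ioo, ENNReal.toReal_ofReal', smul_eq_mul, mul_one]
        by_cases h : s ∈ Ioi (π + θ)
        · rw [Set.indicator_of_mem h]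
          exact max_eq_left (by simp only [mem_Ioi] at h; linarith)
        · rw [Set.indicator_of_notMem h]
          exact max_eq_right (by simp only [mem_Ioi, not_lt] at h; linarith)
lemma Afun_le (u : ℝ) : Afun u ≤ π :=
  abs_le.mpr ⟨(Complex.neg_pi_lt_arg _).le, Complex.arg_le_pi _⟩

lemma Afun_nonneg (u : ℝ) : 0 ≤ Afun u := abs_nonneg _

lemma integral_id_chart (μ : Measure S1) [IsProbabilityMeasure μ] (p : S1)
    (hcrit : mMean μ p = 0) : ∫ s, s ∂(chartMeasure μ p) = 0 := hcrit

lemma main_pos (μ : Measure S1) [IsProbabilityMeasure μ] (p : S1)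
    (hcrit : mMean μ p = 0) {θ : ℝ} (hθ : θ ∈ Ioo 0 π) :
    frechet μ (chart p θ) - frechet μ p
      = 2*π * ∫ t in (0:ℝ)..θ,
          (t/(2*π) - (chartMeasure μ p (Ico (-π) (-π + t))).toReal) := by
  set ν := chartMeasure μ p with hν
  have hπ := Real.pi_pos
  have haeb := chartMeasure_ae μ p
  have hIA : Integrable (fun s => (Afun (s - θ))^2) ν :=
    integrable_of_bdd (π^2) ((measurable_Afun.comp (measurable_id.sub_const θ)).pow_const 2)
      (Filter.Eventually.of_forall fun s => by
        rw [abs_of_nonneg (by positivity)]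
        have h1 := Afun_le (s - θ); have h2 := Afun_nonneg (s - θ); nlinarith)
  have hIs2 : Integrable (fun s => s^2) ν :=
    integrable_of_bdd (π^2) (measurable_id.pow_const 2)
      (by filter_upwards [haeb] with s hs
          rw [abs_of_nonneg (by positivity)]
          nlinarith [hs.1, hs.2])
  have hIid : Integrable (fun s => s) ν :=
    integrable_of_bdd π measurable_id
      (by filter_upwards [haeb] with s hs
          rw [abs_le]; exact ⟨hs.1, hs.2.le⟩)
  have hIind : Integrable ((Iio (θ - π)).indicator (fun s => θ - π - s)) ν :=
    integrable_of_bdd (3*π)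
      ((measurable_const.sub measurable_id).indicator measurableSet_Iio)
      (by filter_upwards [haeb] with s hs
          by_cases h : s ∈ Iio (θ - π)
          · rw [Set.indicator_of_mem h, abs_le]
            constructor <;> [linarith [hs.2, hθ.1]; linarith [hs.1, hθ.2]]
          · rw [Set.indicator_of_notMem h]; simp; positivity)
  have key : ∫ s, (Afun (s - θ))^2 ∂ν
      = (∫ s, s^2 ∂ν) + θ^2
        - 4*π * ∫ s, (Iio (θ - π)).indicator (fun s => θ - π - s) s ∂ν := by
    have hcong : ∫ s, (Afun (s - θ))^2 ∂ν
        = ∫ s, ((s^2 + (θ^2 - 2*θ*s))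
            + (-(4*π)) * (Iio (θ - π)).indicator (fun s => θ - π - s) s) ∂ν := by
      apply integral_congr_ae
      filter_upwards [haeb] with s hs
      rw [pointwise_pos hθ hs]
      by_cases h : s ∈ Iio (θ - π)
      · rw [Set.indicator_of_mem h, Set.indicator_of_mem h]; ring
      · rw [Set.indicator_of_notMem h, Set.indicator_of_notMem h]; ring
    have hlin' : Integrable (fun s => θ^2 - 2*θ*s) ν := by
      have := (integrable_const (θ^2) (μ := ν)).sub (hIid.const_mul (2*θ))
      exact this
    have h1 : Integrable (fun s => s^2 + (θ^2 - 2*θ*s)) ν := hIs2.add hlin'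
    rw [hcong, integral_add h1 (hIind.const_mul _),
      integral_add hIs2 hlin',
      integral_sub (integrable_const _) (hIid.const_mul (2*θ)),
      MeasureTheory.integral_const_mul, MeasureTheory.integral_const_mul, integral_id_chart μ p hcrit]
    simp [measure_univ]
    ring
  have hgmono : Monotone (fun t => (ν (Ico (-π) (-π + t))).toReal) := by
    intro a b hab
    exact ENNReal.toReal_mono (measure_ne_top ν _)
      (measure_mono (Ico_subset_Ico_right (by linarith)))
  have hsplit : ∫ t in (0:ℝ)..θ, (t/(2*π) - (ν (Ico (-π) (-π + t))).toReal)
      = (∫ t in (0:ℝ)..θ, t/(2*π))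
        - ∫ t in (0:ℝ)..θ, (ν (Ico (-π) (-π + t))).toReal :=
    intervalIntegral.integral_sub
      ((continuous_id.div_const _).intervalIntegrable _ _)
      ((hgmono.monotoneOn _).intervalIntegrable)
  have hlin : ∫ t in (0:ℝ)..θ, t/(2*π) = (θ^2 - 0^2)/2/(2*π) := by
    rw [intervalIntegral.integral_div, integral_id]
  rw [frechet_chart, frechet_self, ← hν, key, hsplit, hlin, fubini_pos μ p hθ, ← hν]
  field_simp
  ring

lemma main_neg (μ : Measure S1) [IsProbabilityMeasure μ] (p : S1)
    (hcrit : mMean μ p = 0) {θ : ℝ} (hθ : θ ∈ Ico (-π) 0) :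
    frechet μ (chart p θ) - frechet μ p
      = 2*π * ∫ t in θ..(0:ℝ),
          (-t/(2*π) - (chartMeasure μ p (Ioo (π + t) π)).toReal) := by
  set ν := chartMeasure μ p with hν
  have hπ := Real.pi_pos
  have haeb := chartMeasure_ae μ p
  have hIA : Integrable (fun s => (Afun (s - θ))^2) ν :=
    integrable_of_bdd (π^2) ((measurable_Afun.comp (measurable_id.sub_const θ)).pow_const 2)
      (Filter.Eventually.of_forall fun s => by
        rw [abs_of_nonneg (by positivity)]
        have h1 := Afun_le (s - θ); have h2 := Afun_nonneg (s - θ); nlinarith)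
  have hIs2 : Integrable (fun s => s^2) ν :=
    integrable_of_bdd (π^2) (measurable_id.pow_const 2)
      (by filter_upwards [haeb] with s hs
          rw [abs_of_nonneg (by positivity)]
          nlinarith [hs.1, hs.2])
  have hIid : Integrable (fun s => s) ν :=
    integrable_of_bdd π measurable_id
      (by filter_upwards [haeb] with s hs
          rw [abs_le]; exact ⟨hs.1, hs.2.le⟩)
  have hIind : Integrable ((Ioi (π + θ)).indicator (fun s => s - π - θ)) ν :=
    integrable_of_bdd (3*π)
      (((measurable_id.sub_const π).sub_const θ).indicator measurableSet_Ioi)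
      (by filter_upwards [haeb] with s hs
          by_cases h : s ∈ Ioi (π + θ)
          · rw [Set.indicator_of_mem h, abs_le]
            constructor <;> [linarith [hs.1, hθ.2]; linarith [hs.2, hθ.1]]
          · rw [Set.indicator_of_notMem h]; simp; positivity)
  have key : ∫ s, (Afun (s - θ))^2 ∂ν
      = (∫ s, s^2 ∂ν) + θ^2
        - 4*π * ∫ s, (Ioi (π + θ)).indicator (fun s => s - π - θ) s ∂ν := by
    have hcong : ∫ s, (Afun (s - θ))^2 ∂ν
        = ∫ s, ((s^2 + (θ^2 - 2*θ*s))
            + (-(4*π)) * (Ioi (π + θ)).indicator (fun s => s - π - θ) s) ∂ν := by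
      apply integral_congr_ae
      filter_upwards [haeb] with s hs
      rw [pointwise_neg hθ hs]
      by_cases h : s ∈ Ioi (π + θ)
      · rw [Set.indicator_of_mem h, Set.indicator_of_mem h]; ring
      · rw [Set.indicator_of_notMem h, Set.indicator_of_notMem h]; ring
    have hlin' : Integrable (fun s => θ^2 - 2*θ*s) ν := by
      have := (integrable_const (θ^2) (μ := ν)).sub (hIid.const_mul (2*θ))
      exact this
    have h1 : Integrable (fun s => s^2 + (θ^2 - 2*θ*s)) ν := hIs2.add hlin'
    rw [hcong, integral_add h1 (hIind.const_mul _),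
      integral_add hIs2 hlin',
      integral_sub (integrable_const _) (hIid.const_mul (2*θ)),
      MeasureTheory.integral_const_mul, MeasureTheory.integral_const_mul, integral_id_chart μ p hcrit]
    simp [measure_univ]
    ring
  have hgmono : Antitone (fun t => (ν (Ioo (π + t) π)).toReal) := by
    intro a b hab
    exact ENNReal.toReal_mono (measure_ne_top ν _)
      (measure_mono (Ioo_subset_Ioo_left (by linarith)))
  have hsplit : ∫ t in θ..(0:ℝ), (-t/(2*π) - (ν (Ioo (π + t) π)).toReal)
      = (∫ t in θ..(0:ℝ), -t/(2*π))
        - ∫ t in θ..(0:ℝ), (ν (Ioo (π + t) π)).toReal :=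
    intervalIntegral.integral_sub
      ((continuous_id.neg.div_const _).intervalIntegrable _ _)
      ((hgmono.antitoneOn _).intervalIntegrable)
  have hlin : ∫ t in θ..(0:ℝ), -t/(2*π) = -((0^2 - θ^2)/2)/(2*π) := by
    rw [intervalIntegral.integral_div]
    congr 1
    rw [intervalIntegral.integral_neg, integral_id]
  rw [frechet_chart, frechet_self, ← hν, key, hsplit, hlin, fubini_neg μ p hθ, ← hν]
  field_simp
  ring

/-- Theorem `th:crit`: for a critical point `p*` of the Fréchet functional
(i.e. an exponential barycenter, `m(μ_{p*}) = 0`), `p*` is the well-defined Fréchet mean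
(unique global minimizer) iff the integrated comparison with the uniform measure holds,
using `λ([-π, -π+t)) = t/(2π)` and `λ((π+t, π)) = -t/(2π)`. -/
theorem frechet_mean_iff_uniform_comparison (μ : Measure S1) [IsProbabilityMeasure μ]
    (pstar : S1) (hcrit : mMean μ pstar = 0) :
    ((∀ q : S1, q ≠ pstar → frechet μ pstar < frechet μ q) ↔
      ((∀ θ : ℝ, 0 < θ → θ < π →
          0 < ∫ t in (0:ℝ)..θ,
            (t / (2*π) - (chartMeasure μ pstar (Ico (-π) (-π + t))).toReal)) ∧
       (∀ θ : ℝ, -π ≤ θ → θ < 0 →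
          0 < ∫ t in θ..(0:ℝ),
            (-t / (2*π) - (chartMeasure μ pstar (Ioo (π + t) π)).toReal)))) := by
  have hπ := Real.pi_pos
  constructor
  · intro hmin
    constructor
    · intro θ h0 hπθ
      have hmem : θ ∈ Ico (-π) π := ⟨by linarith, hπθ⟩
      have hne : chart pstar θ ≠ pstar := by
        intro h
        have h2 := invChart_chart pstar hmem
        rw [h, invChart_self] at h2
        linarith [h2]
      have hlt := hmin _ hne
      have h3 := main_pos μ pstar hcrit ⟨h0, hπθ⟩
      by_contra hcon
      push_neg at hcon
      nlinarith
    · intro θ hπθ h0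
      have hmem : θ ∈ Ico (-π) π := ⟨hπθ, by linarith⟩
      have hne : chart pstar θ ≠ pstar := by
        intro h
        have h2 := invChart_chart pstar hmem
        rw [h, invChart_self] at h2
        linarith [h2]
      have hlt := hmin _ hne
      have h3 := main_neg μ pstar hcrit ⟨hπθ, h0⟩
      by_contra hcon
      push_neg at hcon
      nlinarith
  · rintro ⟨hpos, hneg⟩ q hq
    have hmem := invChart_mem pstar q
    have hq' : chart pstar (invChart pstar q) = q := chart_invChart pstar q
    have hθ0 : invChart pstar q ≠ 0 := by
      intro h
      apply hq
      rw [← hq', h, chart_zero]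
    rcases lt_or_gt_of_ne hθ0 with h | h
    · have h3 := main_neg μ pstar hcrit ⟨hmem.1, h⟩
      have hI := hneg _ hmem.1 h
      rw [hq'] at h3
      nlinarith
    · have h3 := main_pos μ pstar hcrit ⟨h, hmem.2⟩
      have hI := hpos _ h hmem.2
      rw [hq'] at h3
      nlinarith
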